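/- Let p ∈ ℂ[s] be a polynomial of degree N_p with leading coefficient p_{N_p} ≠ 0, and let N_q ∈ ℕ be such that p and s^{N_q} are coprime (i.e. N_q = 0 or p(0) ≠ 0) and N_p = N_q + 2. Then there exists exactly one nonzero f ∈ ℂ((x)) of negative order satisfying f^{N_q}·(df/dx) = p(f); moreover this f has order exactly −1 and its leading coefficient equals −1/p_{N_p}. -/

import Mathlib

/-- Formal derivative of a Laurent series. -/
noncomputable def lsDeriv {A : Type*} [Ring A] (f : LaurentSeries A) : LaurentSeries A where
  coeff k := (k + 1) • f.coeff (k + 1)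
  isPWO_support' := by
    refine (f.isPWO_support.image_of_monotone
      (f := fun m : ℤ => m - 1) (fun a b h => by simpa using h)).mono ?_
    intro k hk
    have hk' : f.coeff (k + 1) ≠ 0 := by
      intro h
      simp [Function.mem_support, h] at hk
    exact ⟨k + 1, hk', by ring⟩

open PowerSeries

noncomputable def psD (F : ℂ⟦X⟧) : ℂ⟦X⟧ := PowerSeries.mk fun n => (n : ℂ) * PowerSeries.coeff n F

@[simp] lemma psD_coeff (F : ℂ⟦X⟧) (n : ℕ) : PowerSeries.coeff n (psD F) = (n : ℂ) * PowerSeries.coeff n F :=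
  PowerSeries.coeff_mk _ _

noncomputable def psE (p : Polynomial ℂ) (Nq : ℕ) (F : ℂ⟦X⟧) : ℂ⟦X⟧ :=
  F ^ Nq * psD F - F ^ (Nq + 1)
    - ∑ j ∈ Finset.range (Nq + 3), Polynomial.coeff p j • (F ^ j * PowerSeries.X ^ (Nq + 2 - j))

lemma psD_sub (F G : ℂ⟦X⟧) : psD (F - G) = psD F - psD G := by
  ext n; simp [psD]; ring

lemma X_pow_dvd_psD {n : ℕ} {F : ℂ⟦X⟧} (h : (X : ℂ⟦X⟧) ^ n ∣ F) : (X : ℂ⟦X⟧) ^ n ∣ psD F := by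
  rw [PowerSeries.X_pow_dvd_iff] at h ⊢
  intro m hm; simp [h m hm]

lemma psD_C_mul_X_pow (b : ℂ) (n : ℕ) : psD (PowerSeries.C b * X ^ n) = PowerSeries.C ((n : ℂ) * b) * X ^ n := by
  ext k
  simp only [psD_coeff, PowerSeries.coeff_C_mul, PowerSeries.coeff_X_pow]
  by_cases h : k = n <;> simp [h] <;> ring

lemma psE_congr {n : ℕ} {F G : ℂ⟦X⟧} (p : Polynomial ℂ) (Nq : ℕ)
    (h : (X : ℂ⟦X⟧) ^ (n+1) ∣ F - G) : (X : ℂ⟦X⟧) ^ (n+1) ∣ psE p Nq F - psE p Nq G := by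
  have hpow : ∀ m : ℕ, (X : ℂ⟦X⟧) ^ (n+1) ∣ F ^ m - G ^ m := fun m =>
    h.trans (sub_dvd_pow_sub_pow F G m)
  have hmul : ∀ (A B A' B' : ℂ⟦X⟧), (X : ℂ⟦X⟧) ^ (n+1) ∣ A - A' → (X : ℂ⟦X⟧) ^ (n+1) ∣ B - B' →
      (X : ℂ⟦X⟧) ^ (n+1) ∣ A * B - A' * B' := by
    intro A B A' B' hA hB
    have : A * B - A' * B' = A * (B - B') + (A - A') * B' := by ring
    rw [this]
    exact dvd_add (Dvd.dvd.mul_left hB A) (Dvd.dvd.mul_right hA B')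
  have hD : (X : ℂ⟦X⟧) ^ (n+1) ∣ psD F - psD G := by
    rw [← psD_sub]; exact X_pow_dvd_psD h
  unfold psE
  have h1 : (X : ℂ⟦X⟧)^(n+1) ∣ (F ^ Nq * psD F - G ^ Nq * psD G) := hmul _ _ _ _ (hpow Nq) hD
  have h2 := hpow (Nq + 1)
  have h3 : (X : ℂ⟦X⟧)^(n+1) ∣
      ((∑ j ∈ Finset.range (Nq + 3), Polynomial.coeff p j • (F ^ j * X ^ (Nq + 2 - j)))
      - ∑ j ∈ Finset.range (Nq + 3), Polynomial.coeff p j • (G ^ j * X ^ (Nq + 2 - j))) := by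
    rw [← Finset.sum_sub_distrib]
    refine Finset.dvd_sum fun j _ => ?_
    rw [← smul_sub, PowerSeries.smul_eq_C_mul]
    exact Dvd.dvd.mul_left (hmul _ _ _ _ (hpow j) (by simp)) _
  have := dvd_sub (dvd_sub h1 h2) h3
  convert this using 1
  ring

lemma pow_pert (F : ℂ⟦X⟧) (b : ℂ) (n : ℕ) (hn : 1 ≤ n) (m : ℕ) :
    (X : ℂ⟦X⟧) ^ (n+1) ∣
      (F + PowerSeries.C b * X ^ n) ^ m - F ^ m
        - (m : ℂ⟦X⟧) * (PowerSeries.C b * X ^ n) * F ^ (m - 1) := by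
  set u : ℂ⟦X⟧ := PowerSeries.C b * X ^ n with hu
  have h2 : (X : ℂ⟦X⟧) ^ (n+1) ∣ u * u := by
    have hx : (X : ℂ⟦X⟧) ^ (n+1) ∣ X ^ (n+n) := pow_dvd_pow X (by omega)
    have huu : u * u = (PowerSeries.C b * PowerSeries.C b) * X ^ (n+n) := by
      rw [hu, mul_mul_mul_comm, ← pow_add]
    rw [huu]
    exact hx.mul_left _
  induction m with
  | zero => simp
  | succ m ih =>
      obtain ⟨w, hw⟩ := ih
      have hw' : (F + u) ^ m = F ^ m + (m : ℂ⟦X⟧) * u * F ^ (m-1) + X ^ (n+1) * w := by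
        rw [← hw]; ring
      match m with
      | 0 => convert dvd_zero ((X:ℂ⟦X⟧)^(n+1)) using 1; push_cast; ring
      | Nat.succ k =>
          have : (F + u) ^ (k + 1 + 1) - F ^ (k + 1 + 1)
              - ((k+1+1 : ℕ) : ℂ⟦X⟧) * u * F ^ (k + 1 + 1 - 1)
              = ((k+1 : ℕ) : ℂ⟦X⟧) * F ^ k * (u * u) + (X ^ (n+1) * w) * (F + u) := by
            simp only [Nat.succ_eq_add_one, Nat.add_sub_cancel] at hw'
            rw [pow_succ, hw']
            push_cast
            ring
          rw [this]
          exact dvd_add (Dvd.dvd.mul_left h2 _) (Dvd.dvd.mul_right (Dvd.dvd.mul_right dvd_rfl w) _)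

lemma psD_add (F G : ℂ⟦X⟧) : psD (F + G) = psD F + psD G := by
  ext n; simp [psD]; ring

lemma key_const (n : ℕ) (H : ℂ⟦X⟧) (c : ℂ) (hc : PowerSeries.constantCoeff H = c) :
    (X : ℂ⟦X⟧) ^ (n+1) ∣ H * X ^ n - PowerSeries.C c * X ^ n := by
  have hX : (X : ℂ⟦X⟧) ∣ H - PowerSeries.C c := by
    rw [PowerSeries.X_dvd_iff]; simp [hc]
  obtain ⟨g, hg⟩ := hX
  refine ⟨g, ?_⟩
  rw [← sub_mul, hg, pow_succ]
  ring

lemma key_const0 (n : ℕ) (H : ℂ⟦X⟧) (hc : PowerSeries.constantCoeff H = 0) :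
    (X : ℂ⟦X⟧) ^ (n+1) ∣ H * X ^ n := by
  have := key_const n H 0 hc
  simpa using this

lemma psE_pert (p : Polynomial ℂ) (Nq : ℕ) (F : ℂ⟦X⟧) (b : ℂ) (n : ℕ) (hn : 1 ≤ n) :
    (X : ℂ⟦X⟧) ^ (n+1) ∣
      psE p Nq (F + PowerSeries.C b * X ^ n) - psE p Nq F
        - PowerSeries.C (b * ((n : ℂ) * (PowerSeries.constantCoeff F) ^ Nq
            - ((Nq : ℂ) + 1) * (PowerSeries.constantCoeff F) ^ Nq
            - ((Nq : ℂ) + 2) * p.coeff (Nq+2) * (PowerSeries.constantCoeff F) ^ (Nq+1))) * X ^ n := by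
  set a : ℂ := PowerSeries.constantCoeff F with ha
  set u : ℂ⟦X⟧ := PowerSeries.C b * X ^ n with hu
  set G : ℂ⟦X⟧ := F + u with hG
  set d : ℂ⟦X⟧ := X ^ (n+1) with hd
  have hpowm : ∀ m : ℕ, d ∣ G ^ m - F ^ m - (m : ℂ⟦X⟧) * u * F ^ (m - 1) :=
    fun m => pow_pert F b n hn m
  have hFm0 : ∀ m : ℕ, PowerSeries.constantCoeff (F ^ m) = a ^ m := fun m => by
    rw [map_pow]
  have hu0 : PowerSeries.constantCoeff u = 0 := by
    simp [hu, map_mul, map_pow, PowerSeries.constantCoeff_X, zero_pow (by omega : n ≠ 0)]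
  -- term 1
  obtain ⟨w, hw0⟩ := hpowm Nq
  have hw : G ^ Nq = F ^ Nq + (Nq : ℂ⟦X⟧) * u * F ^ (Nq - 1) + d * w := by
    rw [← hw0]; ring
  have hpsDu : psD u = PowerSeries.C ((n : ℂ) * b) * X ^ n := psD_C_mul_X_pow b n
  have hpsDG : psD G = psD F + PowerSeries.C ((n : ℂ) * b) * X ^ n := by
    rw [hG, psD_add, hpsDu]
  have hpsDF0 : PowerSeries.constantCoeff (psD F) = 0 := by
    have h := psD_coeff F 0
    rw [PowerSeries.coeff_zero_eq_constantCoeff_apply] at h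
    simpa using h
  have t1 : d ∣ G ^ Nq * psD G - F ^ Nq * psD F - PowerSeries.C ((n:ℂ) * b * a ^ Nq) * X ^ n := by
    have hB : d ∣ (d * w) * psD G := Dvd.dvd.mul_right (Dvd.dvd.mul_right dvd_rfl w) _
    have hA : d ∣ ((Nq : ℂ⟦X⟧) * PowerSeries.C b * F ^ (Nq-1) * psD F) * X ^ n :=
      key_const0 n _ (by simp [map_mul, hpsDF0])
    have hD : d ∣ ((Nq : ℂ⟦X⟧) * PowerSeries.C b * F ^ (Nq-1) * (PowerSeries.C ((n:ℂ) * b) * X ^ n)) * X ^ n :=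
      key_const0 n _ (by simp [map_mul, map_pow, PowerSeries.constantCoeff_X, zero_pow (by omega : n ≠ 0)])
    have hC1 : d ∣ (F ^ Nq * PowerSeries.C ((n:ℂ) * b)) * X ^ n - PowerSeries.C ((n:ℂ) * b * a ^ Nq) * X ^ n :=
      key_const n _ _ (by rw [map_mul, hFm0, PowerSeries.constantCoeff_C]; ring)
    have hall := dvd_add (dvd_add (dvd_add hB hA) hD) hC1
    convert hall using 1
    rw [hw, hpsDG, hu]
    ring
  -- term 2
  have t2 : d ∣ G ^ (Nq+1) - F ^ (Nq+1) - PowerSeries.C (((Nq:ℂ)+1) * b * a ^ Nq) * X ^ n := by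
    have h₁ := hpowm (Nq+1)
    simp only [Nat.add_sub_cancel] at h₁
    have h₂ : d ∣ (((Nq:ℂ⟦X⟧)+1) * PowerSeries.C b * F ^ Nq) * X ^ n
        - PowerSeries.C (((Nq:ℂ)+1) * b * a ^ Nq) * X ^ n :=
      key_const n _ _ (by simp [map_mul, hFm0, map_natCast])
    have hall := dvd_add h₁ h₂
    convert hall using 1
    rw [hu]
    push_cast
    ring
  -- term 3
  have t3 : d ∣ (∑ j ∈ Finset.range (Nq + 3), p.coeff j • (G ^ j * X ^ (Nq + 2 - j)))
      - (∑ j ∈ Finset.range (Nq + 3), p.coeff j • (F ^ j * X ^ (Nq + 2 - j)))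
      - PowerSeries.C (((Nq:ℂ)+2) * p.coeff (Nq+2) * b * a ^ (Nq+1)) * X ^ n := by
    have hsplit : (∑ j ∈ Finset.range (Nq + 3), p.coeff j • (G ^ j * X ^ (Nq + 2 - j)))
        - (∑ j ∈ Finset.range (Nq + 3), p.coeff j • (F ^ j * X ^ (Nq + 2 - j)))
        = (∑ j ∈ Finset.range (Nq + 2), p.coeff j • ((G ^ j - F ^ j) * X ^ (Nq + 2 - j)))
          + p.coeff (Nq+2) • (G ^ (Nq+2) - F ^ (Nq+2)) := by
      rw [← Finset.sum_sub_distrib, Finset.sum_range_succ]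
      congr 1
      · apply Finset.sum_congr rfl; intros; rw [← smul_sub, ← sub_mul]
      · rw [← smul_sub, Nat.sub_self, pow_zero, mul_one, mul_one]
    have hmain : d ∣ ∑ j ∈ Finset.range (Nq + 2), p.coeff j • ((G ^ j - F ^ j) * X ^ (Nq + 2 - j)) := by
      refine Finset.dvd_sum fun j hj => ?_
      rw [Finset.mem_range] at hj
      rw [PowerSeries.smul_eq_C_mul]
      refine Dvd.dvd.mul_left ?_ _
      have hD1 : 1 ≤ Nq + 2 - j := by omega
      have e1 : d ∣ (G ^ j - F ^ j - (j : ℂ⟦X⟧) * u * F ^ (j-1)) * X ^ (Nq + 2 - j) :=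
        Dvd.dvd.mul_right (hpowm j) _
      have e2 : d ∣ ((j : ℂ⟦X⟧) * u * F ^ (j-1)) * X ^ (Nq + 2 - j) := by
        have : (X : ℂ⟦X⟧) ^ (n+1) ∣ X ^ (n + (Nq + 2 - j)) := pow_dvd_pow X (by omega)
        have he : ((j : ℂ⟦X⟧) * u * F ^ (j-1)) * X ^ (Nq + 2 - j)
            = ((j : ℂ⟦X⟧) * PowerSeries.C b * F ^ (j-1)) * X ^ (n + (Nq + 2 - j)) := by
          rw [hu, pow_add]
          ring
        rw [he, hd]
        exact Dvd.dvd.mul_left this _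
      have hall := dvd_add e1 e2
      convert hall using 1
      ring
    have hlast : d ∣ p.coeff (Nq+2) • (G ^ (Nq+2) - F ^ (Nq+2))
        - PowerSeries.C (((Nq:ℂ)+2) * p.coeff (Nq+2) * b * a ^ (Nq+1)) * X ^ n := by
      have h₁ := hpowm (Nq+2)
      try simp only [Nat.add_sub_cancel] at h₁
      have h₁' : d ∣ p.coeff (Nq+2) • (G ^ (Nq+2) - F ^ (Nq+2) - ((Nq+2 : ℕ) : ℂ⟦X⟧) * u * F ^ (Nq+1)) := by
        rw [PowerSeries.smul_eq_C_mul]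
        exact Dvd.dvd.mul_left h₁ _
      have h₂ : d ∣ (PowerSeries.C (p.coeff (Nq+2)) * ((Nq:ℂ⟦X⟧)+2) * PowerSeries.C b * F ^ (Nq+1)) * X ^ n
          - PowerSeries.C (((Nq:ℂ)+2) * p.coeff (Nq+2) * b * a ^ (Nq+1)) * X ^ n :=
        key_const n _ _ (by simp only [map_mul, map_add, map_natCast, map_ofNat, PowerSeries.constantCoeff_C, hFm0]; ring)
      have hall := dvd_add h₁' h₂
      convert hall using 1
      rw [PowerSeries.smul_eq_C_mul, PowerSeries.smul_eq_C_mul, hu]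
      push_cast
      ring
    have hall := dvd_add hmain hlast
    rw [hsplit]
    convert hall using 1
    ring
  -- combine
  have hC : PowerSeries.C (b * ((n : ℂ) * a ^ Nq - ((Nq : ℂ) + 1) * a ^ Nq
        - ((Nq : ℂ) + 2) * p.coeff (Nq+2) * a ^ (Nq+1)))
      = PowerSeries.C ((n:ℂ) * b * a ^ Nq) - PowerSeries.C (((Nq:ℂ)+1) * b * a ^ Nq)
        - PowerSeries.C (((Nq:ℂ)+2) * p.coeff (Nq+2) * b * a ^ (Nq+1)) := by
    rw [← map_sub, ← map_sub]
    congr 1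
    ring
  have hall := dvd_sub (dvd_sub t1 t2) t3
  convert hall using 1
  unfold psE
  rw [hC]
  ring

lemma coeff_eq_of_dvd {n : ℕ} {A B : ℂ⟦X⟧} (h : (X:ℂ⟦X⟧)^(n+1) ∣ A - B) :
    ∀ k ≤ n, PowerSeries.coeff k A = PowerSeries.coeff k B := by
  intro k hk
  have := PowerSeries.X_pow_dvd_iff.mp h k (by omega)
  rw [map_sub, sub_eq_zero] at this
  exact this

lemma dvd_of_coeff_eq {n : ℕ} {A B : ℂ⟦X⟧} (h : ∀ k ≤ n, PowerSeries.coeff k A = PowerSeries.coeff k B) :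
    (X:ℂ⟦X⟧)^(n+1) ∣ A - B := by
  rw [PowerSeries.X_pow_dvd_iff]
  intro m hm
  rw [map_sub, sub_eq_zero]
  exact h m (by omega)

lemma psE_coeff_congr {n : ℕ} {F G : ℂ⟦X⟧} (p : Polynomial ℂ) (Nq : ℕ)
    (h : ∀ k ≤ n, PowerSeries.coeff k F = PowerSeries.coeff k G) :
    PowerSeries.coeff n (psE p Nq F) = PowerSeries.coeff n (psE p Nq G) :=
  coeff_eq_of_dvd (psE_congr p Nq (dvd_of_coeff_eq h)) n le_rfl

lemma psE_pert_coeff (p : Polynomial ℂ) (Nq : ℕ) (F : ℂ⟦X⟧) (b : ℂ) (n : ℕ) (hn : 1 ≤ n) :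
    PowerSeries.coeff n (psE p Nq (F + PowerSeries.C b * X ^ n))
      = PowerSeries.coeff n (psE p Nq F)
        + b * ((n : ℂ) * (PowerSeries.constantCoeff F) ^ Nq
            - ((Nq : ℂ) + 1) * (PowerSeries.constantCoeff F) ^ Nq
            - ((Nq : ℂ) + 2) * p.coeff (Nq+2) * (PowerSeries.constantCoeff F) ^ (Nq+1)) := by
  have h := psE_pert p Nq F b n hn
  have h2 := PowerSeries.X_pow_dvd_iff.mp h n (by omega)
  rw [map_sub, map_sub, sub_eq_zero, sub_eq_iff_eq_add'] at h2
  rw [h2]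
  rw [PowerSeries.coeff_C_mul, PowerSeries.coeff_X_pow]
  simp [mul_comm]

lemma psE_coeff_zero (p : Polynomial ℂ) (Nq : ℕ) (F : ℂ⟦X⟧) :
    PowerSeries.coeff 0 (psE p Nq F)
      = -(PowerSeries.constantCoeff F) ^ (Nq+1)
        - p.coeff (Nq+2) * (PowerSeries.constantCoeff F) ^ (Nq+2) := by
  set a : ℂ := PowerSeries.constantCoeff F with ha
  unfold psE
  rw [map_sub, map_sub, map_sum]
  rw [PowerSeries.coeff_zero_eq_constantCoeff_apply, PowerSeries.coeff_zero_eq_constantCoeff_apply]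
  have h1 : PowerSeries.constantCoeff (F ^ Nq * psD F) = 0 := by
    rw [map_mul]
    have h := psD_coeff F 0
    rw [PowerSeries.coeff_zero_eq_constantCoeff_apply] at h
    simp [h]
  have h2 : PowerSeries.constantCoeff (F ^ (Nq+1)) = a ^ (Nq+1) := by rw [map_pow]
  have h3 : ∑ j ∈ Finset.range (Nq + 3), PowerSeries.coeff 0 (p.coeff j • (F ^ j * X ^ (Nq + 2 - j)))
      = p.coeff (Nq+2) * a ^ (Nq+2) := by
    rw [Finset.sum_range_succ]
    have hz : ∀ j ∈ Finset.range (Nq+2), PowerSeries.coeff 0 (p.coeff j • (F ^ j * X ^ (Nq + 2 - j))) = 0 := by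
      intro j hj
      rw [Finset.mem_range] at hj
      rw [PowerSeries.coeff_smul, PowerSeries.coeff_zero_eq_constantCoeff_apply, map_mul, map_pow,
        map_pow, PowerSeries.constantCoeff_X, zero_pow (by omega : Nq + 2 - j ≠ 0)]
      simp
    rw [Finset.sum_eq_zero hz, zero_add, PowerSeries.coeff_smul,
      PowerSeries.coeff_zero_eq_constantCoeff_apply, Nat.sub_self, pow_zero, mul_one, map_pow]
    simp [smul_eq_mul, ← ha]
  rw [h1, h2, h3]
  ring

noncomputable def solC (p : Polynomial ℂ) (Nq : ℕ) : ℕ → ℂ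
  | 0 => -(p.leadingCoeff)⁻¹
  | (n+1) =>
      -(PowerSeries.coeff (n+1) (psE p Nq
        (PowerSeries.mk fun k => if h : k < n+1 then solC p Nq k else 0)))
        / (((n:ℂ)+2) * (-(p.leadingCoeff)⁻¹)^Nq)
  termination_by n => n
  decreasing_by exact h

lemma lin_simp (p : Polynomial ℂ) (Nq : ℕ) (hlc : p.leadingCoeff ≠ 0)
    (hdeg : p.natDegree = Nq + 2) (n : ℕ) :
    ((n:ℂ)+1) * (-(p.leadingCoeff)⁻¹) ^ Nq - ((Nq : ℂ) + 1) * (-(p.leadingCoeff)⁻¹) ^ Nq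
        - ((Nq : ℂ) + 2) * p.coeff (Nq+2) * (-(p.leadingCoeff)⁻¹) ^ (Nq+1)
      = ((n:ℂ)+2) * (-(p.leadingCoeff)⁻¹) ^ Nq := by
  have hc : p.coeff (Nq+2) = p.leadingCoeff := by
    rw [Polynomial.leadingCoeff, hdeg]
  rw [hc]
  have hma : p.leadingCoeff * (-(p.leadingCoeff)⁻¹) = -1 := by field_simp
  linear_combination (-((Nq:ℂ)+2) * ((-(p.leadingCoeff)⁻¹)) ^ Nq) * hma

lemma solC_a_ne (p : Polynomial ℂ) (hlc : p.leadingCoeff ≠ 0) : (-(p.leadingCoeff)⁻¹ : ℂ) ≠ 0 := by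
  simp [hlc]

lemma psE_solC (p : Polynomial ℂ) (Nq : ℕ) (hlc : p.leadingCoeff ≠ 0)
    (hdeg : p.natDegree = Nq + 2) :
    psE p Nq (PowerSeries.mk (solC p Nq)) = 0 := by
  set a : ℂ := -(p.leadingCoeff)⁻¹ with ha
  have ha0 : a ≠ 0 := solC_a_ne p hlc
  have hc : p.coeff (Nq+2) = p.leadingCoeff := by rw [Polynomial.leadingCoeff, hdeg]
  ext n
  rw [map_zero]
  match n with
  | 0 =>
      rw [psE_coeff_zero]
      have h0 : PowerSeries.constantCoeff (PowerSeries.mk (solC p Nq)) = a := by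
        rw [← PowerSeries.coeff_zero_eq_constantCoeff_apply, PowerSeries.coeff_mk, solC]
      rw [h0, hc]
      have hma : p.leadingCoeff * a = -1 := by rw [ha]; field_simp
      linear_combination (-(a^(Nq+1))) * hma
  | (n+1) =>
      set G : ℂ⟦X⟧ := PowerSeries.mk fun k => if h : k < n+1 then solC p Nq k else 0 with hGdef
      have hG0 : PowerSeries.constantCoeff G = a := by
        rw [← PowerSeries.coeff_zero_eq_constantCoeff_apply, hGdef, PowerSeries.coeff_mk,
          dif_pos (by omega : 0 < n+1), solC]
      have h1 : ∀ k ≤ n+1, PowerSeries.coeff k (PowerSeries.mk (solC p Nq))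
          = PowerSeries.coeff k (G + PowerSeries.C (solC p Nq (n+1)) * X ^ (n+1)) := by
        intro k hk
        rw [map_add, PowerSeries.coeff_mk, hGdef, PowerSeries.coeff_mk,
          PowerSeries.coeff_C_mul, PowerSeries.coeff_X_pow]
        rcases lt_or_eq_of_le hk with h | h
        · rw [dif_pos h, if_neg (by omega), mul_zero, add_zero]
        · rw [dif_neg (by omega), if_pos h, mul_one, zero_add, h]
      rw [psE_coeff_congr p Nq h1, psE_pert_coeff p Nq G _ _ (by omega), hG0]
      have hl := lin_simp p Nq hlc hdeg n
      rw [← ha] at hl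
      push_cast at hl ⊢
      rw [hl]
      have hsol : solC p Nq (n+1)
          = -(PowerSeries.coeff (n+1) (psE p Nq G)) / (((n:ℂ)+2) * a ^ Nq) := by
        rw [solC, hGdef]
      rw [hsol]
      have hne : ((n:ℂ)+2) * a ^ Nq ≠ 0 := by
        apply mul_ne_zero _ (pow_ne_zero _ ha0)
        exact_mod_cast (by omega : (n+2 : ℕ) ≠ 0)
      field_simp
      rw [div_self (left_ne_zero_of_mul hne)]; ring

lemma psE_unique (p : Polynomial ℂ) (Nq : ℕ) (hlc : p.leadingCoeff ≠ 0)
    (hdeg : p.natDegree = Nq + 2) (F G : ℂ⟦X⟧)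
    (hF0 : PowerSeries.constantCoeff F = -(p.leadingCoeff)⁻¹)
    (hG0 : PowerSeries.constantCoeff G = -(p.leadingCoeff)⁻¹)
    (hEF : psE p Nq F = 0) (hEG : psE p Nq G = 0) : F = G := by
  set a : ℂ := -(p.leadingCoeff)⁻¹ with ha
  have ha0 : a ≠ 0 := solC_a_ne p hlc
  have key : ∀ n, ∀ k ≤ n, PowerSeries.coeff k F = PowerSeries.coeff k G := by
    intro n
    induction n with
    | zero =>
        intro k hk
        rw [Nat.le_zero] at hk
        subst hk
        rw [PowerSeries.coeff_zero_eq_constantCoeff_apply, PowerSeries.coeff_zero_eq_constantCoeff_apply,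
          hF0, hG0]
    | succ n ih =>
        intro k hk
        rcases Nat.lt_or_ge k (n+1) with h | h
        · exact ih k (by omega)
        · have hkeq : k = n+1 := by omega
          subst hkeq
          set b : ℂ := PowerSeries.coeff (n+1) G - PowerSeries.coeff (n+1) F with hb
          have hagree : ∀ k ≤ n+1, PowerSeries.coeff k G
              = PowerSeries.coeff k (F + PowerSeries.C b * X ^ (n+1)) := by
            intro k hk
            rw [map_add, PowerSeries.coeff_C_mul, PowerSeries.coeff_X_pow]
            rcases lt_or_eq_of_le hk with h | h
            · rw [if_neg (by omega), mul_zero, add_zero, ih k (by omega)]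
            · rw [if_pos h, mul_one, h, hb]
              ring
          have h2 := psE_coeff_congr p Nq hagree
          rw [hEG, psE_pert_coeff p Nq F b (n+1) (by omega), hEF, hF0] at h2
          have hl := lin_simp p Nq hlc hdeg n
          rw [← ha] at hl
          push_cast at hl h2
          rw [hl] at h2
          have hne : ((n:ℂ)+2) * a ^ Nq ≠ 0 := by
            apply mul_ne_zero _ (pow_ne_zero _ ha0)
            exact_mod_cast (by omega : (n+2 : ℕ) ≠ 0)
          have hb0 : b = 0 := by
            simp only [map_zero] at h2
            field_simp at h2
            have h2' : b * (((n:ℂ)+2) * a ^ Nq) = 0 := by linear_combination -h2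
            exact (mul_eq_zero.mp h2').resolve_right hne
          have := sub_eq_zero.mp (hb ▸ hb0)
          exact this.symm
  ext n
  exact key n n le_rfl

open HahnSeries

lemma ls_single_mul_coeff (a : ℤ) (r : ℂ) (g : LaurentSeries ℂ) (k : ℤ) :
    (HahnSeries.single a r * g).coeff k = r * g.coeff (k - a) := by
  have := HahnSeries.coeff_single_mul_add (r := r) (x := g) (b := a) (a := k - a)
  rwa [sub_add_cancel] at this

lemma lsDeriv_coeff (f : LaurentSeries ℂ) (k : ℤ) :
    (lsDeriv f).coeff k = (k + 1 : ℤ) • f.coeff (k + 1) := rfl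

lemma lsDeriv_single_one_mul (a : ℤ) (g : LaurentSeries ℂ) :
    lsDeriv (HahnSeries.single a (1:ℂ) * g)
      = HahnSeries.single (a-1) ((a : ℂ)) * g + HahnSeries.single a (1:ℂ) * lsDeriv g := by
  ext k
  rw [HahnSeries.coeff_add, lsDeriv_coeff, ls_single_mul_coeff, ls_single_mul_coeff,
    ls_single_mul_coeff, lsDeriv_coeff]
  rw [zsmul_eq_mul, zsmul_eq_mul]
  have h1 : k + 1 - a = k - (a - 1) := by ring
  rw [h1]
  push_cast
  ring

lemma ls_coe_coeff (F : ℂ⟦X⟧) (k : ℤ) :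
    (F : LaurentSeries ℂ).coeff k = if 0 ≤ k then PowerSeries.coeff k.toNat F else 0 := by
  rcases le_or_gt 0 k with h | h
  · rw [if_pos h]
    have hk : k = ((k.toNat : ℕ) : ℤ) := (Int.toNat_of_nonneg h).symm
    rw [hk]
    exact LaurentSeries.coeff_coe_powerSeries F k.toNat
  · rw [if_neg (not_le.mpr h)]
    rw [HahnSeries.ofPowerSeries_apply]
    apply HahnSeries.embDomain_notin_range
    intro hc
    simp only [Set.mem_range, RelEmbedding.coe_mk, Function.Embedding.coeFn_mk, Nat.castOrderEmbedding_apply] at hc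
    obtain ⟨m, hm⟩ := hc
    omega

lemma ls_psD_coe (F : ℂ⟦X⟧) :
    ((psD F : ℂ⟦X⟧) : LaurentSeries ℂ) = HahnSeries.single (1:ℤ) (1:ℂ) * lsDeriv (F : LaurentSeries ℂ) := by
  ext k
  rw [ls_single_mul_coeff, lsDeriv_coeff, ls_coe_coeff, ls_coe_coeff, zsmul_eq_mul]
  rcases le_or_gt 0 k with h | h
  · rw [if_pos h, if_pos (by omega : (0:ℤ) ≤ k - 1 + 1), psD_coeff]
    have h2 : (k - 1 + 1) = k := by ring
    rw [h2]
    have h3 : ((k.toNat : ℕ) : ℂ) = (k : ℂ) := by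
      exact_mod_cast congrArg Int.cast (Int.toNat_of_nonneg h)
    rw [h3]
    push_cast
    ring
  · rw [if_neg (not_le.mpr h)]
    rcases le_or_gt 0 (k - 1 + 1) with h2 | h2
    · exact absurd h2 (by omega)
    · rw [if_neg (not_le.mpr h2)]
      ring

lemma ls_coeff_sum {α : Type*} (s : Finset α) (f : α → LaurentSeries ℂ) (k : ℤ) :
    (∑ j ∈ s, f j).coeff k = ∑ j ∈ s, (f j).coeff k := by
  classical
  induction s using Finset.induction with
  | empty => simp
  | insert a s h ih => rw [Finset.sum_insert h, Finset.sum_insert h, HahnSeries.coeff_add, ih]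

lemma ls_t_mul_s : (HahnSeries.single (1:ℤ) (1:ℂ)) * (HahnSeries.single (-1:ℤ) (1:ℂ)) = 1 := by
  rw [HahnSeries.single_mul_single]
  norm_num

lemma ls_t_ne : (HahnSeries.single (1:ℤ) (1:ℂ)) ≠ 0 := HahnSeries.single_ne_zero one_ne_zero

lemma ofPS_smul (c : ℂ) (A : ℂ⟦X⟧) :
    HahnSeries.ofPowerSeries ℤ ℂ (c • A) = c • HahnSeries.ofPowerSeries ℤ ℂ A := by
  rw [PowerSeries.smul_eq_C_mul, map_mul, HahnSeries.ofPowerSeries_C,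
    ← HahnSeries.single_zero_mul_eq_smul, HahnSeries.C_apply]

lemma laurent_equiv (p : Polynomial ℂ) (Nq : ℕ) (hdeg : p.natDegree = Nq + 2) (F : ℂ⟦X⟧) :
    ((HahnSeries.single (-1:ℤ) (1:ℂ) * HahnSeries.ofPowerSeries ℤ ℂ F) ^ Nq
        * lsDeriv (HahnSeries.single (-1:ℤ) (1:ℂ) * HahnSeries.ofPowerSeries ℤ ℂ F)
      = Polynomial.aeval (HahnSeries.single (-1:ℤ) (1:ℂ) * HahnSeries.ofPowerSeries ℤ ℂ F) p)
    ↔ psE p Nq F = 0 := by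
  set t : LaurentSeries ℂ := HahnSeries.single (1:ℤ) (1:ℂ) with ht
  set s : LaurentSeries ℂ := HahnSeries.single (-1:ℤ) (1:ℂ) with hs
  set φ := HahnSeries.ofPowerSeries ℤ ℂ with hφ
  set f : LaurentSeries ℂ := s * φ F with hf
  have hts : t * s = 1 := ls_t_mul_s
  have htm : ∀ m : ℕ, t ^ m * s ^ m = 1 := fun m => by rw [← mul_pow, hts, one_pow]
  have htX : φ PowerSeries.X = t := HahnSeries.ofPowerSeries_X
  have ht2 : t * t * HahnSeries.single (-2:ℤ) (-1:ℂ) = -1 := by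
    rw [ht, HahnSeries.single_mul_single, HahnSeries.single_mul_single]
    norm_num
  have hDf : lsDeriv f = HahnSeries.single (-2:ℤ) (-1:ℂ) * φ F + s * lsDeriv (φ F) := by
    rw [hf, hs, lsDeriv_single_one_mul]
    norm_num
  have htD : t * lsDeriv (φ F) = φ (psD F) := (ls_psD_coe F).symm
  -- LHS transfer
  have hLHS : t ^ (Nq+2) * (f ^ Nq * lsDeriv f) = φ (F ^ Nq * psD F - F ^ (Nq+1)) := by
    rw [hDf, hf, mul_pow, map_sub, map_mul, map_pow, map_pow]
    have e1 : t ^ (Nq + 2) * (s ^ Nq * φ F ^ Nq * (HahnSeries.single (-2:ℤ) (-1:ℂ) * φ F + s * lsDeriv (φ F)))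
        = (t ^ Nq * s ^ Nq) * (φ F ^ Nq * ((t * t * HahnSeries.single (-2:ℤ) (-1:ℂ)) * φ F
            + (t * s) * (t * lsDeriv (φ F)))) := by
      ring
    rw [e1, htm, ht2, hts, htD, one_mul, one_mul]
    ring
  -- RHS transfer
  have hRHS : t ^ (Nq+2) * Polynomial.aeval f p
      = φ (∑ j ∈ Finset.range (Nq + 3), p.coeff j • (F ^ j * PowerSeries.X ^ (Nq + 2 - j))) := by
    rw [Polynomial.aeval_eq_sum_range (R := ℂ), hdeg, map_sum, Finset.mul_sum]
    refine Finset.sum_congr rfl fun j hj => ?_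
    rw [Finset.mem_range] at hj
    rw [PowerSeries.smul_eq_C_mul, map_mul, map_mul, map_pow, map_pow, htX,
      Algebra.smul_def, HahnSeries.algebraMap_apply']
    have hALG : algebraMap ℂ ℂ⟦X⟧ (p.coeff j) = PowerSeries.C (p.coeff j) := by
      rw [PowerSeries.algebraMap_apply, Algebra.algebraMap_self, RingHom.id_apply]
    rw [hALG, hf, mul_pow, ← hφ]
    have e2 : t ^ (Nq + 2) = t ^ (Nq + 2 - j) * t ^ j := by
      rw [← _root_.pow_add]
      congr 1
      omega
    rw [e2]
    have e3 : t ^ (Nq + 2 - j) * t ^ j * (φ (PowerSeries.C (p.coeff j)) * (s ^ j * φ F ^ j))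
        = (t ^ j * s ^ j) * (φ (PowerSeries.C (p.coeff j)) * (φ F ^ j * t ^ (Nq + 2 - j))) := by ring
    rw [e3, htm, one_mul]
  constructor
  · intro h
    have h2 : φ (F ^ Nq * psD F - F ^ (Nq+1))
        = φ (∑ j ∈ Finset.range (Nq + 3), p.coeff j • (F ^ j * PowerSeries.X ^ (Nq + 2 - j))) := by
      rw [← hLHS, ← hRHS, h]
    have h3 := HahnSeries.ofPowerSeries_injective h2
    unfold psE
    linear_combination h3
  · intro h
    have h3 : F ^ Nq * psD F - F ^ (Nq+1)
        = ∑ j ∈ Finset.range (Nq + 3), p.coeff j • (F ^ j * PowerSeries.X ^ (Nq + 2 - j)) := by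
      have := h
      unfold psE at this
      linear_combination this
    have h5 : t ^ (Nq+2) * (f ^ Nq * lsDeriv f) = t ^ (Nq+2) * Polynomial.aeval f p := by
      rw [hLHS, hRHS, h3]
    exact mul_left_cancel₀ (pow_ne_zero _ (by rw [ht]; exact ls_t_ne)) h5

lemma ls_leadingCoeff (x : LaurentSeries ℂ) (hx : x ≠ 0) : x.leadingCoeff = x.coeff x.order := by
  exact HahnSeries.leadingCoeff_eq

lemma ls_order_eq {g : LaurentSeries ℂ} {a : ℤ} (h1 : g.coeff a ≠ 0)
    (h2 : ∀ k < a, g.coeff k = 0) : g.order = a := by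
  have hg : g ≠ 0 := fun h => h1 (by simp [h])
  refine le_antisymm (HahnSeries.order_le_of_coeff_ne_zero h1) ?_
  by_contra hlt
  push_neg at hlt
  exact (HahnSeries.coeff_order_eq_zero.not.mpr hg) (h2 _ hlt)

lemma lsDeriv_facts {f : LaurentSeries ℂ} (hf : f ≠ 0) (hne : f.order ≠ 0) :
    lsDeriv f ≠ 0 ∧ (lsDeriv f).order = f.order - 1
      ∧ (lsDeriv f).coeff (f.order - 1) = (f.order : ℂ) * f.coeff f.order := by
  have hc : (lsDeriv f).coeff (f.order - 1) = (f.order : ℂ) * f.coeff f.order := by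
    rw [lsDeriv_coeff, sub_add_cancel, zsmul_eq_mul]
  have hcn : (lsDeriv f).coeff (f.order - 1) ≠ 0 := by
    rw [hc]
    exact mul_ne_zero (by exact_mod_cast hne) ((HahnSeries.coeff_order_eq_zero.not.mpr hf))
  have hlow : ∀ k < f.order - 1, (lsDeriv f).coeff k = 0 := by
    intro k hk
    rw [lsDeriv_coeff, HahnSeries.coeff_eq_zero_of_lt_order (by omega), smul_zero]
  exact ⟨fun h => hcn (by simp [h]), ls_order_eq hcn hlow, hc⟩

lemma ls_pow_facts {f : LaurentSeries ℂ} (hf : f ≠ 0) (j : ℕ) :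
    (f ^ j).order = (j : ℤ) * f.order ∧ (f ^ j).coeff ((j : ℤ) * f.order) = (f.coeff f.order) ^ j := by
  induction j with
  | zero =>
      constructor
      · simp [HahnSeries.order_one]
      · simp [HahnSeries.coeff_one]
  | succ j ih =>
      have hfj : f ^ j ≠ 0 := pow_ne_zero _ hf
      have hord : (f ^ (j+1)).order = ((j:ℤ)+1) * f.order := by
        rw [pow_succ, HahnSeries.order_mul hfj hf, ih.1]
        ring
      constructor
      · push_cast
        exact hord
      · have := HahnSeries.coeff_mul_order_add_order (f ^ j) f
        rw [ls_leadingCoeff _ hfj, ls_leadingCoeff _ hf, ih.1] at this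
        have e : ((j:ℤ)+1) * f.order = (j:ℤ) * f.order + f.order := by ring
        rw [← pow_succ] at this
        push_cast
        rw [e, this, ih.2, pow_succ]
  
lemma part2 (p : Polynomial ℂ) (hp : p ≠ 0) (Nq : ℕ) (hdeg : p.natDegree = Nq + 2)
    (f : LaurentSeries ℂ) (hf : f ≠ 0) (hord : f.order < 0)
    (heq : f ^ Nq * lsDeriv f = Polynomial.aeval f p) :
    f.order = -1 ∧ f.coeff (-1) = -(p.leadingCoeff)⁻¹ := by
  have hlc : p.leadingCoeff ≠ 0 := Polynomial.leadingCoeff_ne_zero.mpr hp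
  set m : ℤ := f.order with hm
  set c : ℂ := f.coeff m with hc
  have hcne : c ≠ 0 := (HahnSeries.coeff_order_eq_zero.not.mpr hf)
  obtain ⟨hD0, hDord, hDc⟩ := lsDeriv_facts hf (by omega)
  -- coefficient of RHS at (Nq+2) * m
  have hRHS : (Polynomial.aeval f p).coeff (((Nq:ℤ)+2) * m) = p.leadingCoeff * c ^ (Nq+2) := by
    rw [Polynomial.aeval_eq_sum_range (R := ℂ), hdeg]
    simp only [Algebra.smul_def, HahnSeries.algebraMap_apply', PowerSeries.algebraMap_apply,
      Algebra.algebraMap_self, RingHom.id_apply, HahnSeries.ofPowerSeries_C, HahnSeries.C_apply]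
    rw [ls_coeff_sum, Finset.sum_range_succ]
    have hz : ∀ j ∈ Finset.range (Nq+2),
        (HahnSeries.single (0:ℤ) (p.coeff j) * f ^ j).coeff (((Nq:ℤ)+2) * m) = 0 := by
      intro j hj
      rw [Finset.mem_range] at hj
      rw [ls_single_mul_coeff, sub_zero, HahnSeries.coeff_eq_zero_of_lt_order, mul_zero]
      rw [(ls_pow_facts hf j).1]
      have : (j:ℤ) < (Nq:ℤ)+2 := by exact_mod_cast hj
      nlinarith [hord]
    rw [Finset.sum_eq_zero hz, zero_add, ls_single_mul_coeff, sub_zero]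
    have := (ls_pow_facts hf (Nq+2)).2
    push_cast at this
    rw [this]
    rw [Polynomial.leadingCoeff, hdeg]
  have hRHSne : p.leadingCoeff * c ^ (Nq+2) ≠ 0 := mul_ne_zero hlc (pow_ne_zero _ hcne)
  -- LHS order
  have hLord : (f ^ Nq * lsDeriv f).order = (Nq:ℤ) * m + (m - 1) := by
    rw [HahnSeries.order_mul (pow_ne_zero _ hf) hD0, (ls_pow_facts hf Nq).1, hDord]
  have hm1 : m = -1 := by
    have hle : (f ^ Nq * lsDeriv f).order ≤ ((Nq:ℤ)+2) * m := by
      by_contra hgt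
      push_neg at hgt
      have := HahnSeries.coeff_eq_zero_of_lt_order (x := f ^ Nq * lsDeriv f) hgt
      rw [heq, hRHS] at this
      exact hRHSne this
    rw [hLord] at hle
    have h2m : m ≥ -1 := by nlinarith
    omega
  -- leading coefficient
  have hLc : (f ^ Nq * lsDeriv f).coeff (((Nq:ℤ)+2) * m) = c ^ Nq * ((m:ℂ) * c) := by
    have := HahnSeries.coeff_mul_order_add_order (f ^ Nq) (lsDeriv f)
    rw [ls_leadingCoeff _ (pow_ne_zero _ hf), ls_leadingCoeff _ hD0, (ls_pow_facts hf Nq).1,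
      hDord, (ls_pow_facts hf Nq).2, hDc] at this
    have e : (Nq:ℤ) * m + (m - 1) = ((Nq:ℤ)+2) * m := by rw [hm1]; ring
    rw [e] at this
    exact this
  have hkey : c ^ Nq * ((m:ℂ) * c) = p.leadingCoeff * c ^ (Nq+2) := by
    rw [← hLc, heq, hRHS]
  rw [hm1] at hkey
  push_cast at hkey
  have hcc : c = -(p.leadingCoeff)⁻¹ := by
    have h1 : c ^ (Nq+1) ≠ 0 := pow_ne_zero _ hcne
    field_simp
    have h2 : c ^ Nq * (-1 * c) = p.leadingCoeff * c ^ (Nq+2) := hkey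
    have h3 : c ^ (Nq+1) * (-1) = c ^ (Nq+1) * (p.leadingCoeff * c) := by
      rw [pow_succ]
      ring_nf
      ring_nf at h2
      linear_combination h2
    have h4 := mul_left_cancel₀ h1 h3
    linear_combination -h4
  exact ⟨hm1, by rw [show (-1:ℤ) = m from hm1.symm, ← hc]; exact hcc⟩

lemma ls_ofPS_coeff (F : ℂ⟦X⟧) (k : ℤ) :
    (HahnSeries.ofPowerSeries ℤ ℂ F).coeff k
      = if 0 ≤ k then PowerSeries.coeff k.toNat F else 0 :=
  ls_coe_coeff F k

/-- Let `p ∈ ℂ[s]` be nonzero of degree `N_p` with leading coefficient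
`p_{N_p} ≠ 0`, with `p, s^{N_q}` coprime (`N_q = 0` or `p(0) ≠ 0`) and
`N_p = N_q + 2`.  There is exactly one nonzero `f ∈ ℂ((x))` of negative order with
`f^{N_q}·(df/dx) = p(f)`; moreover this `f` has order exactly `−1` and its leading
coefficient is `−1/p_{N_p}`. -/
theorem stmt_7 (p : Polynomial ℂ) (hp : p ≠ 0) (N_q : ℕ)
    (hco : N_q = 0 ∨ p.coeff 0 ≠ 0) (hdeg : p.natDegree = N_q + 2) :
    (∃! f : LaurentSeries ℂ,
        f ≠ 0 ∧ f.order < 0 ∧ f ^ N_q * lsDeriv f = Polynomial.aeval f p) ∧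
    (∀ f : LaurentSeries ℂ,
        (f ≠ 0 ∧ f.order < 0 ∧ f ^ N_q * lsDeriv f = Polynomial.aeval f p) →
      f.order = -1 ∧ f.coeff (-1) = -(p.leadingCoeff)⁻¹) := by
  have hlc : p.leadingCoeff ≠ 0 := Polynomial.leadingCoeff_ne_zero.mpr hp
  set a : ℂ := -(p.leadingCoeff)⁻¹ with ha
  have ha0 : a ≠ 0 := solC_a_ne p hlc
  -- the solution
  set F₀ : ℂ⟦X⟧ := PowerSeries.mk (solC p N_q) with hF₀
  have hF00 : PowerSeries.constantCoeff F₀ = a := by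
    rw [hF₀, ← PowerSeries.coeff_zero_eq_constantCoeff_apply, PowerSeries.coeff_mk, solC]
  set f₀ : LaurentSeries ℂ := HahnSeries.single (-1:ℤ) (1:ℂ) * HahnSeries.ofPowerSeries ℤ ℂ F₀ with hf₀
  have hf₀coeff : ∀ k : ℤ, f₀.coeff k
      = if 0 ≤ k + 1 then PowerSeries.coeff (k+1).toNat F₀ else 0 := by
    intro k
    rw [hf₀, ls_single_mul_coeff, one_mul, sub_neg_eq_add, ls_ofPS_coeff]
  have hc1 : f₀.coeff (-1) = a := by
    rw [hf₀coeff]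
    norm_num
    rw [← hF00]
  have hlow : ∀ k < (-1:ℤ), f₀.coeff k = 0 := by
    intro k hk
    rw [hf₀coeff, if_neg (by omega)]
  have hf₀ne : f₀ ≠ 0 := fun h => ha0 (by rw [← hc1, h]; simp)
  have hford : f₀.order = -1 := ls_order_eq (by rw [hc1]; exact ha0) hlow
  have heq₀ : f₀ ^ N_q * lsDeriv f₀ = Polynomial.aeval f₀ p :=
    (laurent_equiv p N_q hdeg F₀).mpr (psE_solC p N_q hlc hdeg)
  -- part 2
  have hpart2 : ∀ f : LaurentSeries ℂ,
      (f ≠ 0 ∧ f.order < 0 ∧ f ^ N_q * lsDeriv f = Polynomial.aeval f p) →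
        f.order = -1 ∧ f.coeff (-1) = -(p.leadingCoeff)⁻¹ := by
    intro f ⟨h1, h2, h3⟩
    exact part2 p hp N_q hdeg f h1 h2 h3
  refine ⟨⟨f₀, ⟨hf₀ne, by rw [hford]; norm_num, heq₀⟩, ?_⟩, hpart2⟩
  -- uniqueness
  intro g hg
  obtain ⟨hgord, hgc⟩ := hpart2 g hg
  obtain ⟨hgne, _, hgeq⟩ := hg
  set G : ℂ⟦X⟧ := g.powerSeriesPart with hGdef
  have hrec : HahnSeries.single (-1:ℤ) (1:ℂ) * HahnSeries.ofPowerSeries ℤ ℂ G = g := by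
    have := LaurentSeries.single_order_mul_powerSeriesPart g
    rw [hgord] at this
    exact this
  have hG0 : PowerSeries.constantCoeff G = a := by
    rw [← PowerSeries.coeff_zero_eq_constantCoeff_apply, hGdef,
      LaurentSeries.powerSeriesPart_coeff, hgord]
    norm_num
    rw [hgc]
  have hEG : psE p N_q G = 0 := by
    apply (laurent_equiv p N_q hdeg G).mp
    rw [hrec]
    exact hgeq
  have hGF : G = F₀ :=
    psE_unique p N_q hlc hdeg G F₀ hG0 hF00 hEG (psE_solC p N_q hlc hdeg)
  rw [← hrec, hGF, ← hf₀]
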